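/- Let n = 2k+1 with k ≥ 1. For every integer i with 1 ≤ i ≤ k+1, both i and −i are eigenvalues of the adjacency matrix of the middle-cube M_n, and each has multiplicity C(n, k+1−i) − C(n, k−i), where C(n, −1) = 0. -/

import Mathlib

open Finset Matrix Module

/-- Vertices of the middle-cube `M_n` (with `n = 2k+1`): subsets of `S = {1,…,n}`
(modeled as `Fin n`) of cardinality `k` or `k+1`. -/
abbrev MidVert (n k : ℕ) := {A : Finset (Fin n) // A.card = k ∨ A.card = k + 1}

/-- Adjacency matrix of the middle-cube: two distinct vertices `A`, `B` are adjacent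
iff `A ⊂ B` or `B ⊂ A`. -/
def midAdj (n k : ℕ) : Matrix (MidVert n k) (MidVert n k) ℝ :=
  fun A B => if A.1 ⊂ B.1 ∨ B.1 ⊂ A.1 then 1 else 0

/-- Binomial coefficient `C(n, j)` for an integer `j`, with `C(n, j) = 0` for `j < 0`. -/
def binom (n : ℕ) (j : ℤ) : ℕ := if 0 ≤ j then n.choose j.toNat else 0

namespace MidCube

abbrev Lev (n m : ℕ) := {A : Finset (Fin n) // A.card = m}

lemma card_supersets {n : ℕ} (S : Finset (Fin n)) {t : ℕ} (h : S.card ≤ t) :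
    ((univ : Finset (Finset (Fin n))).filter fun B => B.card = t ∧ S ⊆ B).card
      = (n - S.card).choose (t - S.card) := by
  have hc : Sᶜ.card = n - S.card := by
    rw [Finset.card_compl, Fintype.card_fin]
  rw [← hc, ← Finset.card_powersetCard (t - S.card) Sᶜ]
  apply Finset.card_nbij' (i := fun B => B \ S) (j := fun C => C ∪ S)
  · intro B hB
    simp only [Finset.mem_coe, Finset.mem_filter, Finset.mem_univ, true_and] at hB
    rw [Finset.mem_coe, Finset.mem_powersetCard]
    constructor
    · intro x hx
      simp only [Finset.mem_sdiff] at hx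
      simp [Finset.mem_compl, hx.2]
    · rw [Finset.card_sdiff_of_subset hB.2, hB.1]
  · intro C hC
    rw [Finset.mem_coe, Finset.mem_powersetCard] at hC
    simp only [Finset.mem_coe, Finset.mem_filter, Finset.mem_univ, true_and]
    have hdisj : Disjoint C S := by
      intro X h1 h2 x hx
      exact absurd (h2 hx) (by simpa [Finset.mem_compl] using hC.1 (h1 hx))
    refine ⟨?_, Finset.subset_union_right⟩
    rw [Finset.card_union_of_disjoint hdisj, hC.2]
    omega
  · intro B hB
    simp only [Finset.mem_coe, Finset.mem_filter, Finset.mem_univ, true_and] at hB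
    exact Finset.sdiff_union_of_subset hB.2
  · intro C hC
    rw [Finset.mem_coe, Finset.mem_powersetCard] at hC
    have hdisj : Disjoint C S := by
      intro X h1 h2 x hx
      exact absurd (h2 hx) (by simpa [Finset.mem_compl] using hC.1 (h1 hx))
    exact Finset.union_sdiff_cancel_right hdisj

lemma card_supersets_zero {n : ℕ} (S : Finset (Fin n)) {t : ℕ} (h : t < S.card) :
    ((univ : Finset (Finset (Fin n))).filter fun B => B.card = t ∧ S ⊆ B).card = 0 := by
  rw [Finset.card_eq_zero, Finset.filter_eq_empty_iff]
  rintro B - ⟨h1, h2⟩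
  have := Finset.card_le_card h2
  omega

lemma card_subsets {n : ℕ} (A : Finset (Fin n)) (s : ℕ) :
    ((univ : Finset (Finset (Fin n))).filter fun C => C.card = s ∧ C ⊆ A).card
      = A.card.choose s := by
  rw [← Finset.card_powersetCard s A]
  congr 1
  ext C
  simp only [Finset.mem_filter, Finset.mem_univ, true_and, Finset.mem_powersetCard]
  tauto

noncomputable def upM (n m : ℕ) : Matrix (Lev n (m+1)) (Lev n m) ℝ :=
  fun B A => if A.1 ⊆ B.1 then 1 else 0

noncomputable def LM (n m : ℕ) : Matrix (Lev n m) (Lev n m) ℝ := (upM n m)ᵀ * upM n m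

lemma sum_level_ite {n m : ℕ} (p : Finset (Fin n) → Prop) [DecidablePred p] :
    (∑ B : Lev n m, if p B.1 then (1:ℝ) else 0)
      = ((univ : Finset (Finset (Fin n))).filter fun B => B.card = m ∧ p B).card := by
  classical
  rw [← Finset.sum_subtype ((univ : Finset (Finset (Fin n))).filter fun B => B.card = m)
      (by intro x; simp) (fun B => if p B then (1:ℝ) else 0)]
  rw [Finset.sum_boole, Finset.filter_filter]

lemma LM_apply {n m : ℕ} (A A' : Lev n m) :
    LM n m A A' = ((univ : Finset (Finset (Fin n))).filter
      fun B => B.card = m + 1 ∧ A.1 ∪ A'.1 ⊆ B).card := by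
  classical
  rw [LM, Matrix.mul_apply, ← sum_level_ite (fun B => A.1 ∪ A'.1 ⊆ B)]
  apply Finset.sum_congr rfl
  intro B _
  simp only [Matrix.transpose_apply, upM, Finset.union_subset_iff]
  by_cases h1 : A.1 ⊆ B.1 <;> by_cases h2 : A'.1 ⊆ B.1 <;> simp [h1, h2]

lemma UUt_apply {n m : ℕ} (A A' : Lev n (m+1)) :
    (upM n m * (upM n m)ᵀ) A A' = ((univ : Finset (Finset (Fin n))).filter
      fun C => C.card = m ∧ C ⊆ A.1 ∩ A'.1).card := by
  classical
  rw [Matrix.mul_apply, ← sum_level_ite (fun C => C ⊆ A.1 ∩ A'.1)]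
  apply Finset.sum_congr rfl
  intro C _
  simp only [Matrix.transpose_apply, upM, Finset.subset_inter_iff]
  by_cases h1 : C.1 ⊆ A.1 <;> by_cases h2 : C.1 ⊆ A'.1 <;> simp [h1, h2]

/-- The key commutation identity. -/
lemma key_identity {n m : ℕ} (hn : 2 * (m + 1) ≤ n) :
    LM n (m+1) = upM n m * (upM n m)ᵀ + ((n - 2 * (m + 1) : ℕ) : ℝ) • 1 := by
  ext A A'
  rw [LM_apply, Matrix.add_apply, UUt_apply, Matrix.smul_apply]
  by_cases hAA : A = A'
  · subst hAA
    rw [Matrix.one_apply_eq]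
    have h1 : A.1 ∪ A.1 = A.1 := Finset.union_self _
    have h2 : A.1 ∩ A.1 = A.1 := Finset.inter_self _
    rw [h1, h2, card_supersets _ (by rw [A.2]; omega), card_subsets, A.2]
    have e1 : n - (m+1) = (m+1) + (n - 2*(m+1)) := by omega
    have e2 : m + 1 + 1 - (m+1) = 1 := by omega
    rw [e2, Nat.choose_one_right, Nat.choose_succ_self_right, e1, smul_eq_mul, mul_one]
    push_cast
    ring
  · have hne : A.1 ≠ A'.1 := fun h => hAA (Subtype.ext h)
    rw [Matrix.one_apply_ne hAA, smul_zero, add_zero]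
    have hcard : A.1.card + A'.1.card = (A.1 ∪ A'.1).card + (A.1 ∩ A'.1).card :=
      (Finset.card_union_add_card_inter _ _).symm
    rw [A.2, A'.2] at hcard
    have hu : m + 1 < (A.1 ∪ A'.1).card := by
      rcases lt_or_ge (m+1) (A.1 ∪ A'.1).card with h | h
      · exact h
      · exfalso
        have h1 : A.1 ⊆ A.1 ∪ A'.1 := Finset.subset_union_left
        have h2 : A'.1 ⊆ A.1 ∪ A'.1 := Finset.subset_union_right
        have e1 : A.1 = A.1 ∪ A'.1 :=
          Finset.eq_of_subset_of_card_le h1 (by rw [A.2]; omega)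
        have e2 : A'.1 = A.1 ∪ A'.1 :=
          Finset.eq_of_subset_of_card_le h2 (by rw [A'.2]; omega)
        exact hne (e1.trans e2.symm)
    rcases eq_or_lt_of_le (Nat.succ_le_of_lt hu) with h | h
    · -- |A ∪ A'| = m + 2
      rw [card_supersets _ (by omega), card_subsets]
      have : (A.1 ∩ A'.1).card = m := by omega
      rw [this, ← h]
      simp [Nat.sub_self]
    · -- |A ∪ A'| > m + 2 : both sides zero
      rw [card_supersets_zero _ (by omega), card_subsets]
      rw [Nat.choose_eq_zero_of_lt (by omega)]


lemma sum_finrank_eigen_le {V : Type*} [AddCommGroup V] [Module ℝ V] [FiniteDimensional ℝ V]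
    (T : Module.End ℝ V) (μ : ℕ → ℝ) (s : Finset ℕ)
    (hinj : ∀ j ∈ s, ∀ j' ∈ s, μ j = μ j' → j = j') :
    ∑ j ∈ s, finrank ℝ (T.eigenspace (μ j)) ≤ finrank ℝ V := by
  classical
  have key : ∀ s : Finset ℕ, (∀ j ∈ s, ∀ j' ∈ s, μ j = μ j' → j = j') →
      ∑ j ∈ s, finrank ℝ (T.eigenspace (μ j))
        = finrank ℝ ((⨆ j ∈ s, T.eigenspace (μ j) : Submodule ℝ V)) := by
    intro s
    induction s using Finset.induction_on with
    | empty =>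
      intro _
      have hb : (⨆ j ∈ (∅ : Finset ℕ), T.eigenspace (μ j) : Submodule ℝ V) = ⊥ :=
        le_antisymm (iSup₂_le fun j hj => absurd hj (Finset.notMem_empty j)) bot_le
      rw [Finset.sum_empty, hb, finrank_bot]
    | @insert a s ha ih =>
      intro hinj
      have ih' := ih (fun j hj j' hj' h => hinj j (Finset.mem_insert_of_mem hj)
        j' (Finset.mem_insert_of_mem hj') h)
      rw [Finset.sum_insert ha, Finset.iSup_insert, ih']
      have hdisj : Disjoint (T.eigenspace (μ a))
          ((⨆ j ∈ s, T.eigenspace (μ j) : Submodule ℝ V)) := by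
        refine Disjoint.mono_right ?_ ((Module.End.eigenspaces_iSupIndep T) (μ a))
        refine iSup₂_le fun j hj => ?_
        have hne : μ j ≠ μ a := fun h => ha (by
          have := hinj j (Finset.mem_insert_of_mem hj) a (Finset.mem_insert_self a s) h
          rwa [← this])
        exact le_iSup_of_le (μ j) (le_iSup_of_le hne le_rfl)
      have := Submodule.finrank_sup_add_finrank_inf_eq (T.eigenspace (μ a))
        ((⨆ j ∈ s, T.eigenspace (μ j) : Submodule ℝ V))
      rw [hdisj.eq_bot, finrank_bot, add_zero] at this
      rw [this]
  rw [key s hinj]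
  exact Submodule.finrank_le _

lemma eigen_finrank_eq {V : Type*} [AddCommGroup V] [Module ℝ V] [FiniteDimensional ℝ V]
    (T : Module.End ℝ V) (μ : ℕ → ℝ) (r : ℕ)
    (hinj : ∀ j ≤ r, ∀ j' ≤ r, μ j = μ j' → j = j') (ℓ : ℕ → ℕ)
    (hl : ∀ j ≤ r, ℓ j ≤ finrank ℝ (T.eigenspace (μ j)))
    (hsum : ∑ j ∈ Finset.range (r+1), ℓ j = finrank ℝ V) :
    ∀ j ≤ r, finrank ℝ (T.eigenspace (μ j)) = ℓ j := by
  have hle := sum_finrank_eigen_le T μ (Finset.range (r+1))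
    (fun j hj j' hj' h => hinj j (by simpa using Nat.lt_succ_iff.mp (Finset.mem_range.mp hj))
      j' (Nat.lt_succ_iff.mp (Finset.mem_range.mp hj')) h)
  have hmono : ∀ j ∈ Finset.range (r+1), ℓ j ≤ finrank ℝ (T.eigenspace (μ j)) :=
    fun j hj => hl j (Nat.lt_succ_iff.mp (Finset.mem_range.mp hj))
  have heq : ∑ j ∈ Finset.range (r+1), ℓ j
      = ∑ j ∈ Finset.range (r+1), finrank ℝ (T.eigenspace (μ j)) :=
    le_antisymm (Finset.sum_le_sum hmono) (by rw [hsum]; exact hle)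
  intro j hj
  exact ((Finset.sum_eq_sum_iff_of_le hmono).mp heq j
    (Finset.mem_range.mpr (Nat.lt_succ_iff.mpr hj))).symm


def dmul (n j : ℕ) : ℕ := if j = 0 then 1 else n.choose j - n.choose (j-1)

def muN (n m j : ℕ) : ℕ := (m + 1 - j) * (n - m - j)

noncomputable def TL (n m : ℕ) : Module.End ℝ (Lev n m → ℝ) := Matrix.toLin' (LM n m)

lemma choose_lt {n k j : ℕ} (hn : n = 2 * k + 1) (h1 : 1 ≤ j) (h2 : j ≤ k) :
    n.choose (j-1) < n.choose j := by
  have key := Nat.choose_succ_right_eq n (j-1)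
  have hj : j - 1 + 1 = j := by omega
  rw [hj] at key
  have hpos : 0 < n.choose (j-1) := Nat.choose_pos (by omega)
  by_contra hcon
  push_neg at hcon
  have h3 : n.choose (j-1) * (n - (j-1)) ≤ n.choose (j-1) * j := by
    calc n.choose (j-1) * (n - (j-1)) = n.choose j * j := key.symm
    _ ≤ n.choose (j-1) * j := Nat.mul_le_mul_right j hcon
  have h4 : n - (j-1) ≤ j := Nat.le_of_mul_le_mul_left h3 hpos
  omega

lemma dmul_eq {n k j : ℕ} (hn : n = 2 * k + 1) (h1 : 1 ≤ j) (h2 : j ≤ k) :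
    dmul n j + n.choose (j-1) = n.choose j := by
  have := choose_lt hn h1 h2
  rw [dmul, if_neg (by omega)]
  omega

lemma sum_dmul {n k : ℕ} (hn : n = 2 * k + 1) :
    ∀ m ≤ k, ∑ j ∈ Finset.range (m+1), dmul n j = n.choose m := by
  intro m
  induction m with
  | zero => intro _; simp [dmul]
  | succ m ih =>
    intro hm
    rw [Finset.sum_range_succ, ih (by omega)]
    have := dmul_eq hn (j := m+1) (by omega) hm
    simp only [Nat.add_sub_cancel] at this
    omega

lemma muN_cast {n m j : ℕ} (h1 : j ≤ m + 1) (h2 : m + j ≤ n) :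
    ((muN n m j : ℕ) : ℝ) = ((m:ℝ) + 1 - j) * ((n:ℝ) - m - j) := by
  have e : n - m - j = n - (m + j) := by omega
  rw [muN, e]
  push_cast [Nat.cast_sub h1, Nat.cast_sub h2]
  ring

lemma muN_lt {n m : ℕ} {j j' : ℕ} (hj : j < j') (hj' : j' ≤ m) (hnm : 2 * m < n) :
    muN n m j' < muN n m j := by
  rw [muN, muN]
  have ha : m + 1 - j' < m + 1 - j := by omega
  have hb : n - m - j' ≤ n - m - j := by omega
  have hb' : 0 < n - m - j' := by omega
  calc (m + 1 - j') * (n - m - j') < (m + 1 - j) * (n - m - j') :=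
        Nat.mul_lt_mul_of_lt_of_le ha le_rfl hb'
    _ ≤ (m + 1 - j) * (n - m - j) := Nat.mul_le_mul_left _ hb

lemma muN_inj {n m : ℕ} (hnm : 2 * m < n) {j j' : ℕ} (hj : j ≤ m) (hj' : j' ≤ m)
    (h : muN n m j = muN n m j') : j = j' := by
  rcases lt_trichotomy j j' with hlt | heq | hlt
  · exact absurd h (Nat.ne_of_gt (muN_lt hlt hj' hnm))
  · exact heq
  · exact absurd h (Nat.ne_of_lt (muN_lt hlt hj hnm))

lemma muN_pos {n m j : ℕ} (hj : j ≤ m) (hnm : 2 * m < n) : 0 < muN n m j := by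
  rw [muN]
  have : 0 < m + 1 - j := by omega
  have : 0 < n - m - j := by omega
  positivity

lemma finrank_lev (n m : ℕ) : finrank ℝ (Lev n m → ℝ) = n.choose m := by
  rw [Module.finrank_fintype_fun_eq_card]
  rw [Fintype.card_finset_len, Fintype.card_fin]

lemma TL_zero_eigen {n k : ℕ} (hn : n = 2 * k + 1) :
    (TL n 0).eigenspace ((muN n 0 0 : ℕ) : ℝ) = ⊤ := by
  have hLM : LM n 0 = ((n : ℝ)) • 1 := by
    ext A A'
    have hA : A = A' := by
      apply Subtype.ext
      rw [Finset.card_eq_zero.mp A.2, Finset.card_eq_zero.mp A'.2]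
    subst hA
    rw [LM_apply, Matrix.smul_apply, Matrix.one_apply_eq, smul_eq_mul, mul_one]
    rw [Finset.union_self, card_supersets _ (by rw [Finset.card_eq_zero.mp A.2]; simp)]
    rw [Finset.card_eq_zero.mp A.2]
    simp
  rw [eq_top_iff]
  intro f _
  rw [Module.End.mem_eigenspace_iff, TL, hLM, _root_.map_smul, Matrix.toLin'_one]
  have : muN n 0 0 = n := by rw [muN]; omega
  rw [this]
  rfl

theorem spec {n k : ℕ} (hn : n = 2 * k + 1) :
    ∀ m, m ≤ k → ∀ j, j ≤ m →
      finrank ℝ ((TL n m).eigenspace ((muN n m j : ℕ) : ℝ)) = dmul n j := by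
  intro m
  induction m with
  | zero =>
    intro _ j hj
    interval_cases j
    rw [TL_zero_eigen hn, finrank_top, finrank_lev]
    simp [dmul]
  | succ m ih =>
    intro hm
    have hm' : m ≤ k := by omega
    set U := Matrix.toLin' (upM n m) with hU
    set D := Matrix.toLin' (upM n m)ᵀ with hD
    have hDU : D ∘ₗ U = TL n m := by
      rw [hU, hD, TL, LM, Matrix.toLin'_mul]
    have hT : TL n (m+1) = U ∘ₗ D + ((n - 2*(m+1) : ℕ) : ℝ) • LinearMap.id := by
      rw [TL, key_identity (n := n) (m := m) (by omega), map_add, _root_.map_smul,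
        Matrix.toLin'_mul, Matrix.toLin'_one]
    -- lower bound for j = m+1 via kernel of D
    have hker : LinearMap.ker D ≤ (TL n (m+1)).eigenspace ((muN n (m+1) (m+1) : ℕ) : ℝ) := by
      intro f hf
      rw [LinearMap.mem_ker] at hf
      rw [Module.End.mem_eigenspace_iff, hT]
      have hμ : muN n (m+1) (m+1) = n - 2*(m+1) := by
        rw [muN]
        have h1 : m + 1 + 1 - (m+1) = 1 := by omega
        rw [h1, one_mul]
        omega
      simp [hf, hμ]
    have hkerrank : dmul n (m+1) ≤ finrank ℝ (LinearMap.ker D) := by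
      have h1 := LinearMap.finrank_range_add_finrank_ker D
      have h2 : finrank ℝ (LinearMap.range D) ≤ n.choose m := by
        calc finrank ℝ (LinearMap.range D) ≤ finrank ℝ (Lev n m → ℝ) :=
              (LinearMap.range D).finrank_le
          _ = n.choose m := finrank_lev n m
      rw [finrank_lev] at h1
      have h3 : dmul n (m+1) + n.choose m = n.choose (m+1) :=
        by simpa using dmul_eq hn (j := m+1) (by omega) hm
      omega
    -- lower bounds for j ≤ m via U
    have hup : ∀ j, j ≤ m → dmul n j ≤
        finrank ℝ ((TL n (m+1)).eigenspace ((muN n (m+1) j : ℕ) : ℝ)) := by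
      intro j hj
      set E := (TL n m).eigenspace ((muN n m j : ℕ) : ℝ) with hE
      have hIH : finrank ℝ E = dmul n j := ih hm' j hj
      have hμpos : (0:ℝ) < ((muN n m j : ℕ) : ℝ) := by
        exact_mod_cast muN_pos hj (by omega)
      set g := U.domRestrict E with hg
      have hginj : Function.Injective g := by
        rw [← LinearMap.ker_eq_bot]
        rw [Submodule.eq_bot_iff]
        rintro ⟨v, hv⟩ hgv
        rw [LinearMap.mem_ker, hg, LinearMap.domRestrict_apply] at hgv
        rw [Module.End.mem_eigenspace_iff] at hv
        have h0 : TL n m v = 0 := by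
          rw [← hDU, LinearMap.comp_apply, hgv, map_zero]
        rw [hv] at h0
        have : v = 0 := by
          rcases smul_eq_zero.mp h0 with h | h
          · exact absurd h (ne_of_gt hμpos)
          · exact h
        exact Subtype.ext this
      have hgrange : LinearMap.range g ≤
          (TL n (m+1)).eigenspace ((muN n (m+1) j : ℕ) : ℝ) := by
        rintro x ⟨⟨v, hv⟩, rfl⟩
        rw [Module.End.mem_eigenspace_iff, hg, LinearMap.domRestrict_apply, hT]
        rw [Module.End.mem_eigenspace_iff] at hv
        simp only [LinearMap.add_apply, LinearMap.comp_apply, LinearMap.smul_apply,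
          LinearMap.id_apply]
        have hDUv : D (U v) = ((muN n m j : ℕ) : ℝ) • v := by
          rw [← LinearMap.comp_apply, hDU, hv]
        rw [hDUv, _root_.map_smul, ← add_smul]
        congr 1
        rw [muN_cast (by omega) (by omega), muN_cast (by omega) (by omega),
          Nat.cast_sub (by omega)]
        push_cast
        ring
      have hgrank : finrank ℝ (LinearMap.range g) = dmul n j := by
        have h1 := LinearMap.finrank_range_add_finrank_ker g
        rw [LinearMap.ker_eq_bot.mpr hginj, finrank_bot, add_zero] at h1
        rw [h1, hIH]
      calc dmul n j = finrank ℝ (LinearMap.range g) := hgrank.symm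
        _ ≤ _ := Submodule.finrank_mono hgrange
    -- conclude by exactness
    have := eigen_finrank_eq (TL n (m+1)) (fun j => ((muN n (m+1) j : ℕ) : ℝ)) (m+1)
      (fun j hj j' hj' h => muN_inj (by omega) hj hj' (Nat.cast_injective h))
      (dmul n)
      (fun j hj => by
        rcases Nat.lt_succ_iff_lt_or_eq.mp (Nat.lt_succ_of_le hj) with h | h
        · exact hup j (by omega)
        · subst h
          calc dmul n (m+1) ≤ finrank ℝ (LinearMap.ker D) := hkerrank
            _ ≤ _ := Submodule.finrank_mono hker)
      (by rw [sum_dmul hn (m+1) hm, finrank_lev])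
    exact this

section Bridge
variable {n k : ℕ}

def e1 (n k : ℕ) (A : Lev n k) : MidVert n k := ⟨A.1, Or.inl A.2⟩
def e2 (n k : ℕ) (B : Lev n (k+1)) : MidVert n k := ⟨B.1, Or.inr B.2⟩

def eqv (n k : ℕ) : Lev n k ⊕ Lev n (k+1) ≃ MidVert n k where
  toFun := Sum.elim (e1 n k) (e2 n k)
  invFun w := if h : w.1.card = k then .inl ⟨w.1, h⟩ else .inr ⟨w.1, w.2.resolve_left h⟩
  left_inv s := by
    cases s with
    | inl A => simp [e1, A.2]
    | inr B =>
      have hB : B.1.card ≠ k := by rw [B.2]; omega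
      simp [e2, hB]
  right_inv w := by
    by_cases h : w.1.card = k
    · simp [h, e1]
    · simp [h, e2]

end Bridge

section Bridge2
variable {n k : ℕ}

lemma adj11 (A A' : Lev n k) : midAdj n k (e1 n k A) (e1 n k A') = 0 := by
  rw [midAdj, if_neg]
  rintro (h | h) <;>
  · have := Finset.card_lt_card h
    simp only [e1] at this
    rw [A.2, A'.2] at this
    omega

lemma adj22 (B B' : Lev n (k+1)) : midAdj n k (e2 n k B) (e2 n k B') = 0 := by
  rw [midAdj, if_neg]
  rintro (h | h) <;>
  · have := Finset.card_lt_card h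
    simp only [e2] at this
    rw [B.2, B'.2] at this
    omega

lemma adj12 (A : Lev n k) (B : Lev n (k+1)) :
    midAdj n k (e1 n k A) (e2 n k B) = if A.1 ⊆ B.1 then 1 else 0 := by
  rw [midAdj]
  by_cases h : A.1 ⊆ B.1
  · rw [if_pos h, if_pos]
    left
    refine Finset.ssubset_iff_subset_ne.mpr ⟨h, fun he => ?_⟩
    have : A.1.card = B.1.card := by
      show (e1 n k A).1.card = (e2 n k B).1.card
      rw [he]
    rw [A.2, B.2] at this
    omega
  · rw [if_neg h, if_neg]
    rintro (hs | hs)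
    · exact h hs.subset
    · have := Finset.card_lt_card hs
      simp only [e1, e2] at this
      rw [A.2, B.2] at this
      omega

lemma adj21 (B : Lev n (k+1)) (A : Lev n k) :
    midAdj n k (e2 n k B) (e1 n k A) = if A.1 ⊆ B.1 then 1 else 0 := by
  have : midAdj n k (e2 n k B) (e1 n k A) = midAdj n k (e1 n k A) (e2 n k B) := by
    rw [midAdj, midAdj]
    exact if_congr or_comm rfl rfl
  rw [this, adj12]

lemma toLin_adj_e1 (f : MidVert n k → ℝ) (A : Lev n k) :
    Matrix.toLin' (midAdj n k) f (e1 n k A)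
      = Matrix.toLin' (upM n k)ᵀ (fun B => f (e2 n k B)) A := by
  rw [Matrix.toLin'_apply, Matrix.toLin'_apply]
  show ∑ w, midAdj n k (e1 n k A) w * f w
    = ∑ B, (upM n k)ᵀ A B * (fun B => f (e2 n k B)) B
  rw [← Equiv.sum_comp (eqv n k) (fun w => midAdj n k (e1 n k A) w * f w),
    Fintype.sum_sum_type]
  have h1 : ∀ A' : Lev n k,
      midAdj n k (e1 n k A) ((eqv n k) (Sum.inl A')) * f ((eqv n k) (Sum.inl A')) = 0 := by
    intro A'
    show midAdj n k (e1 n k A) (e1 n k A') * f (e1 n k A') = 0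
    rw [adj11, zero_mul]
  rw [Finset.sum_congr rfl (fun A' _ => h1 A'), Finset.sum_const_zero, zero_add]
  apply Finset.sum_congr rfl
  intro B _
  show midAdj n k (e1 n k A) (e2 n k B) * f (e2 n k B) = (upM n k)ᵀ A B * f (e2 n k B)
  rw [adj12]
  rfl

lemma toLin_adj_e2 (f : MidVert n k → ℝ) (B : Lev n (k+1)) :
    Matrix.toLin' (midAdj n k) f (e2 n k B)
      = Matrix.toLin' (upM n k) (fun A => f (e1 n k A)) B := by
  rw [Matrix.toLin'_apply, Matrix.toLin'_apply]
  show ∑ w, midAdj n k (e2 n k B) w * f w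
    = ∑ A, upM n k B A * (fun A => f (e1 n k A)) A
  rw [← Equiv.sum_comp (eqv n k) (fun w => midAdj n k (e2 n k B) w * f w),
    Fintype.sum_sum_type]
  have h1 : ∀ B' : Lev n (k+1),
      midAdj n k (e2 n k B) ((eqv n k) (Sum.inr B')) * f ((eqv n k) (Sum.inr B')) = 0 := by
    intro B'
    show midAdj n k (e2 n k B) (e2 n k B') * f (e2 n k B') = 0
    rw [adj22, zero_mul]
  rw [Finset.sum_congr rfl (fun B' _ => h1 B'), Finset.sum_const_zero, add_zero]
  apply Finset.sum_congr rfl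
  intro A _
  show midAdj n k (e2 n k B) (e1 n k A) * f (e1 n k A) = upM n k B A * f (e1 n k A)
  rw [adj21]
  rfl

lemma eqv_symm_e1 (A : Lev n k) : (eqv n k).symm (e1 n k A) = Sum.inl A :=
  (eqv n k).symm_apply_apply (Sum.inl A)

lemma eqv_symm_e2 (B : Lev n (k+1)) : (eqv n k).symm (e2 n k B) = Sum.inr B :=
  (eqv n k).symm_apply_apply (Sum.inr B)

lemma wcases (w : MidVert n k) : (∃ A, w = e1 n k A) ∨ (∃ B, w = e2 n k B) := by
  rcases w.2 with h | h
  · exact Or.inl ⟨⟨w.1, h⟩, Subtype.ext rfl⟩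
  · exact Or.inr ⟨⟨w.1, h⟩, Subtype.ext rfl⟩

noncomputable def extMap (n k : ℕ) (t : ℝ) : (Lev n k → ℝ) →ₗ[ℝ] (MidVert n k → ℝ) where
  toFun v w := Sum.elim v (fun B => t⁻¹ * Matrix.toLin' (upM n k) v B) ((eqv n k).symm w)
  map_add' v v' := by
    funext w
    cases h : (eqv n k).symm w with
    | inl A => simp [h]
    | inr B => simp [h, Matrix.mulVec_add, Matrix.mulVec_smul]; ring
  map_smul' c v := by
    funext w
    cases h : (eqv n k).symm w with
    | inl A => simp [h]
    | inr B => simp [h, Matrix.mulVec_add, Matrix.mulVec_smul]; ring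

lemma extMap_e1 (t : ℝ) (v : Lev n k → ℝ) (A : Lev n k) :
    extMap n k t v (e1 n k A) = v A := by
  rw [extMap]
  show Sum.elim _ _ ((eqv n k).symm (e1 n k A)) = v A
  rw [eqv_symm_e1]
  rfl

lemma extMap_e2 (t : ℝ) (v : Lev n k → ℝ) (B : Lev n (k+1)) :
    extMap n k t v (e2 n k B) = t⁻¹ * Matrix.toLin' (upM n k) v B := by
  rw [extMap]
  show Sum.elim _ _ ((eqv n k).symm (e2 n k B)) = _
  rw [eqv_symm_e2]
  rfl

end Bridge2

lemma Mf_e1 {n k : ℕ} {t : ℝ} {f : MidVert n k → ℝ}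
    (hf : Matrix.toLin' (midAdj n k) f = t • f) :
    Matrix.toLin' (upM n k)ᵀ (fun B => f (e2 n k B)) = t • (fun A => f (e1 n k A)) := by
  funext A
  rw [← toLin_adj_e1 f A, hf]
  rfl

lemma Mf_e2 {n k : ℕ} {t : ℝ} {f : MidVert n k → ℝ}
    (hf : Matrix.toLin' (midAdj n k) f = t • f) :
    Matrix.toLin' (upM n k) (fun A => f (e1 n k A)) = t • (fun B => f (e2 n k B)) := by
  funext B
  rw [← toLin_adj_e2 f B, hf]
  rfl

lemma bridge {n k : ℕ} {t : ℝ} (ht : t ≠ 0) :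
    finrank ℝ (Module.End.eigenspace (Matrix.toLin' (midAdj n k)) t)
      = finrank ℝ ((TL n k).eigenspace (t^2)) := by
  classical
  have hDU : Matrix.toLin' (upM n k)ᵀ ∘ₗ Matrix.toLin' (upM n k) = TL n k := by
    rw [TL, LM, Matrix.toLin'_mul]
  apply le_antisymm
  · -- restriction to the k-th level
    set E := Module.End.eigenspace (Matrix.toLin' (midAdj n k)) t with hE
    set g := (LinearMap.funLeft ℝ ℝ (e1 n k)).domRestrict E with hg
    have hginj : Function.Injective g := by
      rw [← LinearMap.ker_eq_bot, Submodule.eq_bot_iff]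
      rintro ⟨f, hf⟩ hgf
      rw [LinearMap.mem_ker, hg, LinearMap.domRestrict_apply] at hgf
      rw [hE, Module.End.mem_eigenspace_iff] at hf
      have hz1 : (fun A => f (e1 n k A)) = 0 := hgf
      have hz2 : (fun B => f (e2 n k B)) = 0 := by
        have h2 := Mf_e2 hf
        rw [hz1, map_zero] at h2
        rcases smul_eq_zero.mp h2.symm with h | h
        · exact absurd h ht
        · exact h
      apply Subtype.ext
      funext w
      rcases wcases w with ⟨A, rfl⟩ | ⟨B, rfl⟩
      · exact congrFun hz1 A
      · exact congrFun hz2 B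
    have hgrange : LinearMap.range g ≤ (TL n k).eigenspace (t^2) := by
      rintro x ⟨⟨f, hf⟩, rfl⟩
      rw [Module.End.mem_eigenspace_iff]
      have hf' : Matrix.toLin' (midAdj n k) f = t • f := by
        rw [← Module.End.mem_eigenspace_iff]
        exact hf
      have : g ⟨f, hf⟩ = fun A => f (e1 n k A) := rfl
      rw [this, ← hDU, LinearMap.comp_apply, Mf_e2 hf', _root_.map_smul, Mf_e1 hf',
        smul_smul, ← pow_two]
    have h1 := LinearMap.finrank_range_add_finrank_ker g
    rw [LinearMap.ker_eq_bot.mpr hginj, finrank_bot, add_zero] at h1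
    rw [← h1]
    exact Submodule.finrank_mono hgrange
  · -- extension from the k-th level
    set E := (TL n k).eigenspace (t^2) with hE
    set g := (extMap n k t).domRestrict E with hg
    have hginj : Function.Injective g := by
      rw [← LinearMap.ker_eq_bot, Submodule.eq_bot_iff]
      rintro ⟨v, hv⟩ hgv
      rw [LinearMap.mem_ker, hg, LinearMap.domRestrict_apply] at hgv
      apply Subtype.ext
      funext A
      calc v A = extMap n k t v (e1 n k A) := (extMap_e1 t v A).symm
        _ = 0 := by rw [hgv]; rfl
    have hgrange : LinearMap.range g ≤ Module.End.eigenspace (Matrix.toLin' (midAdj n k)) t := by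
      rintro x ⟨⟨v, hv⟩, rfl⟩
      rw [Module.End.mem_eigenspace_iff]
      have hv' : TL n k v = t^2 • v := by
        rw [← Module.End.mem_eigenspace_iff]
        exact hv
      have hgv : g ⟨v, hv⟩ = extMap n k t v := rfl
      rw [hgv]
      funext w
      rcases wcases w with ⟨A, rfl⟩ | ⟨B, rfl⟩
      · -- at level k
        rw [toLin_adj_e1 (extMap n k t v) A]
        have he2 : (fun B => extMap n k t v (e2 n k B))
            = t⁻¹ • Matrix.toLin' (upM n k) v := by
          funext B
          rw [extMap_e2]
          rfl
        rw [he2, _root_.map_smul]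
        have hTv : Matrix.toLin' (upM n k)ᵀ (Matrix.toLin' (upM n k) v) = t^2 • v := by
          rw [← LinearMap.comp_apply, hDU, hv']
        rw [hTv]
        show t⁻¹ * (t^2 * v A) = (t • extMap n k t v) (e1 n k A)
        rw [Pi.smul_apply, extMap_e1]
        field_simp
        ring
      · -- at level k+1
        rw [toLin_adj_e2 (extMap n k t v) B]
        have he1 : (fun A => extMap n k t v (e1 n k A)) = v := by
          funext A
          rw [extMap_e1]
        rw [he1]
        show Matrix.toLin' (upM n k) v B = (t • extMap n k t v) (e2 n k B)
        rw [Pi.smul_apply, extMap_e2]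
        field_simp
        rw [smul_eq_mul]
        field_simp
    have h1 := LinearMap.finrank_range_add_finrank_ker g
    rw [LinearMap.ker_eq_bot.mpr hginj, finrank_bot, add_zero] at h1
    rw [← h1]
    exact Submodule.finrank_mono hgrange

lemma binom_natCast (n j : ℕ) : binom n ((j : ℕ) : ℤ) = n.choose j := by
  simp [binom]

lemma binom_neg {n : ℕ} {j : ℤ} (h : j < 0) : binom n j = 0 := by
  simp [binom, not_le.mpr h]

lemma dmul_pos {n k j : ℕ} (hn : n = 2 * k + 1) (hj : j ≤ k) : 0 < dmul n j := by
  rcases Nat.eq_zero_or_pos j with h | h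
  · subst h; simp [dmul]
  · have := choose_lt hn h hj
    rw [dmul, if_neg (by omega)]
    omega

end MidCube


open MidCube

/-- For `n = 2k+1` and `1 ≤ i ≤ k+1`, both `i` and `−i` are eigenvalues of the
adjacency matrix of the middle-cube `M_n`, each with multiplicity (= dimension of the
eigenspace) equal to `C(n, k+1−i) − C(n, k−i)`, where `C(n, −1) = 0`. -/
theorem middle_cube_eigenvalues (k : ℕ) (hk : 1 ≤ k) (i : ℕ) (h1 : 1 ≤ i) (h2 : i ≤ k + 1) :
    Module.End.HasEigenvalue (Matrix.toLin' (midAdj (2 * k + 1) k)) (i : ℝ) ∧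
    Module.End.HasEigenvalue (Matrix.toLin' (midAdj (2 * k + 1) k)) (-(i : ℝ)) ∧
    Module.finrank ℝ
        (Module.End.eigenspace (Matrix.toLin' (midAdj (2 * k + 1) k)) (i : ℝ)) =
      binom (2 * k + 1) ((k : ℤ) + 1 - i) - binom (2 * k + 1) ((k : ℤ) - i) ∧
    Module.finrank ℝ
        (Module.End.eigenspace (Matrix.toLin' (midAdj (2 * k + 1) k)) (-(i : ℝ))) =
      binom (2 * k + 1) ((k : ℤ) + 1 - i) - binom (2 * k + 1) ((k : ℤ) - i) := by
  have hμ : muN (2*k+1) k (k+1-i) = i * i := by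
    rw [muN]
    have e1 : k + 1 - (k+1-i) = i := by omega
    have e2 : 2*k+1 - k - (k+1-i) = i := by omega
    rw [e1, e2]
  have hspec := spec (n := 2*k+1) (k := k) rfl k le_rfl (k+1-i) (by omega)
  have hti : ((i:ℝ)) ≠ 0 := Nat.cast_ne_zero.mpr (by omega)
  have hcast : ((muN (2*k+1) k (k+1-i) : ℕ) : ℝ) = ((i:ℝ))^2 := by
    rw [hμ]; push_cast; ring
  have hb1 : Module.finrank ℝ
      (Module.End.eigenspace (Matrix.toLin' (midAdj (2*k+1) k)) (i : ℝ))
      = dmul (2*k+1) (k+1-i) := by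
    rw [bridge hti, ← hcast, hspec]
  have hb2 : Module.finrank ℝ
      (Module.End.eigenspace (Matrix.toLin' (midAdj (2*k+1) k)) (-(i : ℝ)))
      = dmul (2*k+1) (k+1-i) := by
    have hsq : (-(i:ℝ))^2 = ((i:ℝ))^2 := by ring
    rw [bridge (neg_ne_zero.mpr hti), hsq, ← hcast, hspec]
  have hdpos : 0 < dmul (2*k+1) (k+1-i) := dmul_pos rfl (by omega)
  have hbinom : binom (2*k+1) ((k:ℤ) + 1 - i) - binom (2*k+1) ((k:ℤ) - i)
      = dmul (2*k+1) (k+1-i) := by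
    rcases Nat.lt_or_ge k i with hik | hik
    · -- i = k + 1
      have hi : i = k + 1 := by omega
      have e1 : (k:ℤ) + 1 - i = ((0:ℕ):ℤ) := by omega
      have e2 : (k:ℤ) - i = -1 := by omega
      have e3 : k + 1 - i = 0 := by omega
      rw [e1, e2, binom_natCast, binom_neg (by norm_num), e3]
      simp [dmul]
    · -- 1 ≤ i ≤ k
      have e1 : (k:ℤ) + 1 - i = ((k+1-i : ℕ):ℤ) := by omega
      have e2 : (k:ℤ) - i = ((k-i : ℕ):ℤ) := by omega
      rw [e1, e2, binom_natCast, binom_natCast, dmul, if_neg (by omega)]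
      have e3 : k + 1 - i - 1 = k - i := by omega
      rw [e3]
  refine ⟨?_, ?_, by rw [hb1, hbinom], by rw [hb2, hbinom]⟩
  · rw [Module.End.hasEigenvalue_iff]
    intro hbot
    rw [hbot, finrank_bot] at hb1
    omega
  · rw [Module.End.hasEigenvalue_iff]
    intro hbot
    rw [hbot, finrank_bot] at hb2
    omega
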